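/- For all real numbers x and y with |x| ≤ π/2 and |y| < π/2, one has (x − y)·(sin x − sin y) ≥ ((1 − sin|y|)/(π/2 − |y|))·(x − y)². -/

import Mathlib

open Real

/-- Chord inequality from concavity of sin on `[0, π/2]`. -/
lemma chord_sin {a b : ℝ} (ha : 0 ≤ a) (hab : a ≤ b) (hb : b ≤ π / 2) :
    (π / 2 - a) * Real.sin b ≥ (π / 2 - b) * Real.sin a + (b - a) := by
  rcases eq_or_lt_of_le (hab.trans hb) with h | h
  · -- a = π/2, so b = π/2
    have hb' : b = π / 2 := le_antisymm hb (h ▸ hab)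
    subst hb'
    rw [h]
    simp
  · -- a < π/2
    have hpi : (0:ℝ) < π := Real.pi_pos
    have hd : 0 < π / 2 - a := by linarith
    set l : ℝ := (π / 2 - b) / (π / 2 - a) with hl
    set m : ℝ := (b - a) / (π / 2 - a) with hm
    have hl0 : 0 ≤ l := div_nonneg (by linarith) hd.le
    have hm0 : 0 ≤ m := div_nonneg (by linarith) hd.le
    have hlm : l + m = 1 := by
      rw [hl, hm, ← add_div, div_eq_one_iff_eq hd.ne']
      ring
    have hcomb : l • a + m • (π / 2) = b := by
      rw [smul_eq_mul, smul_eq_mul, hl, hm, div_mul_eq_mul_div, div_mul_eq_mul_div,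
        ← add_div, div_eq_iff hd.ne']
      ring
    have hmem1 : a ∈ Set.Icc (0:ℝ) π := ⟨ha, by linarith⟩
    have hmem2 : (π / 2) ∈ Set.Icc (0:ℝ) π := ⟨by positivity, by linarith⟩
    have := strictConcaveOn_sin_Icc.concaveOn.2 hmem1 hmem2 hl0 hm0 hlm
    rw [hcomb, Real.sin_pi_div_two] at this
    have h1 : l * Real.sin a + m * 1 ≤ Real.sin b := by simpa using this
    have e1 : (π / 2 - a) * l = π / 2 - b := by
      rw [hl, mul_comm, div_mul_cancel₀ _ hd.ne']
    have e2 : (π / 2 - a) * m = b - a := by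
      rw [hm, mul_comm, div_mul_cancel₀ _ hd.ne']
    have H := mul_le_mul_of_nonneg_left h1 hd.le
    have h2 : (π / 2 - b) * Real.sin a + (b - a) ≤ (π / 2 - a) * Real.sin b := by
      calc (π / 2 - b) * Real.sin a + (b - a)
          = ((π / 2 - a) * l) * Real.sin a + ((π / 2 - a) * m) := by rw [e1, e2]
        _ = (π / 2 - a) * (l * Real.sin a + m * 1) := by ring
        _ ≤ (π / 2 - a) * Real.sin b := H
    linarith

/-- Main lemma for `0 ≤ y`. -/
lemma key_sin (x y : ℝ) (hy0 : 0 ≤ y) (hy : y < π / 2) (hx1 : -(π / 2) ≤ x)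
    (hx2 : x ≤ π / 2) :
    (x - y) * (Real.sin x - Real.sin y) ≥
      ((1 - Real.sin y) / (π / 2 - y)) * (x - y) ^ 2 := by
  have hd : 0 < π / 2 - y := by linarith
  have hsy1 : Real.sin y ≤ 1 := Real.sin_le_one y
  have hc0 : 0 ≤ (1 - Real.sin y) / (π / 2 - y) := div_nonneg (by linarith) hd.le
  rcases le_or_gt y x with hxy | hxy
  · -- x ≥ y : use chord with a = y, b = x
    have hch := chord_sin hy0 hxy hx2
    have hs : Real.sin x - Real.sin y ≥ ((1 - Real.sin y) / (π / 2 - y)) * (x - y) := by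
      rw [ge_iff_le, div_mul_eq_mul_div, div_le_iff₀ hd]
      nlinarith [hch]
    have hxy' : 0 ≤ x - y := by linarith
    calc ((1 - Real.sin y) / (π / 2 - y)) * (x - y) ^ 2
        = (x - y) * (((1 - Real.sin y) / (π / 2 - y)) * (x - y)) := by ring
      _ ≤ (x - y) * (Real.sin x - Real.sin y) := by
          exact mul_le_mul_of_nonneg_left hs hxy'
  · rcases le_or_gt 0 x with hx0 | hx0
    · -- 0 ≤ x < y : chord with a = x, b = y
      have hch := chord_sin hx0 hxy.le hy.le
      have hs : Real.sin y - Real.sin x ≥ ((1 - Real.sin y) / (π / 2 - y)) * (y - x) := by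
        rw [ge_iff_le, div_mul_eq_mul_div, div_le_iff₀ hd]
        nlinarith [hch]
      have hxy' : 0 ≤ y - x := by linarith
      have := mul_le_mul_of_nonneg_left hs hxy'
      calc ((1 - Real.sin y) / (π / 2 - y)) * (x - y) ^ 2
          = (y - x) * (((1 - Real.sin y) / (π / 2 - y)) * (y - x)) := by ring
        _ ≤ (y - x) * (Real.sin y - Real.sin x) := this
        _ = (x - y) * (Real.sin x - Real.sin y) := by ring
    · -- x < 0 ≤ y
      have hjy : 2 / π * y ≤ Real.sin y := Real.mul_le_sin hy0 hy.le
      have hjx : Real.sin x ≤ 2 / π * x := by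
        have := Real.mul_le_sin (x := -x) (by linarith) (by linarith)
        rw [Real.sin_neg] at this
        nlinarith
      have hpi : (0:ℝ) < π := Real.pi_pos
      have hjy' : 2 * y ≤ Real.sin y * π := by
        rwa [div_mul_eq_mul_div, div_le_iff₀ hpi] at hjy
      set c : ℝ := (1 - Real.sin y) / (π / 2 - y) with hc
      -- c ≤ 2/π
      have hc2 : c ≤ 2 / π := by
        rw [hc, div_le_div_iff₀ hd hpi]
        nlinarith [hjy']
      -- sin y ≥ c * y
      have hcy : c * y ≤ Real.sin y := by
        rw [hc, div_mul_eq_mul_div, div_le_iff₀ hd]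
        nlinarith [hjy']
      -- sin x ≤ c * x  (x < 0, c ≤ 2/π)
      have hcx : Real.sin x ≤ c * x := by
        have : 2 / π * x ≤ c * x := mul_le_mul_of_nonpos_right hc2 hx0.le
        linarith
      have hs : c * (y - x) ≤ Real.sin y - Real.sin x := by nlinarith
      have hxy' : 0 ≤ y - x := by linarith
      have := mul_le_mul_of_nonneg_left hs hxy'
      calc c * (x - y) ^ 2 = (y - x) * (c * (y - x)) := by ring
        _ ≤ (y - x) * (Real.sin y - Real.sin x) := this
        _ = (x - y) * (Real.sin x - Real.sin y) := by ring

/-- For all real numbers `x` and `y` with `|x| ≤ π/2` and `|y| < π/2`, one has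
`(x − y)·(sin x − sin y) ≥ ((1 − sin|y|)/(π/2 − |y|))·(x − y)²`. -/
theorem sector_bound_sin (x y : ℝ) (hx : |x| ≤ π / 2) (hy : |y| < π / 2) :
    (x - y) * (Real.sin x - Real.sin y) ≥
      ((1 - Real.sin |y|) / (π / 2 - |y|)) * (x - y) ^ 2 := by
  have hx1 : -(π / 2) ≤ x := neg_le_of_abs_le hx
  have hx2 : x ≤ π / 2 := le_of_abs_le hx
  rcases le_or_gt 0 y with hy0 | hy0
  · rw [abs_of_nonneg hy0] at hy ⊢
    exact key_sin x y hy0 hy hx1 hx2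
  · rw [abs_of_neg hy0] at hy ⊢
    rw [show Real.sin (-y) = -Real.sin y from Real.sin_neg y]
    have h := key_sin (-x) (-y) (by linarith) hy (by linarith) (by linarith)
    rw [Real.sin_neg, Real.sin_neg] at h
    have e1 : (x - y) * (Real.sin x - Real.sin y)
        = (-x - -y) * (-Real.sin x - -Real.sin y) := by ring
    have e2 : ((1 - -Real.sin y) / (π / 2 - -y)) * (x - y) ^ 2
        = ((1 - -Real.sin y) / (π / 2 - -y)) * (-x - -y) ^ 2 := by ring
    rw [e1, e2]
    exact h
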